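/- Let 0 < α < 1 be irrational, let f_α(x) = |α − x| and f_1(x) = |1 − x|, and suppose θ is chosen uniformly from {α, 1}. Fix x₀ ∈ (0, α) with generic orbit, and let ρ be the signed graph-distance function on the orbit O_{x₀} (ρ(v₀) = 0 at x₀, positive on the right component of G − v₀, negative on the left). Then for any x ∈ O_{x₀}, ρ(f_θ(x)) = ρ(x) + 1 with probability 1/2 and ρ(f_θ(x)) = ρ(x) − 1 with probability 1/2. -/

import Mathlib

set_option linter.unusedSectionVars false
set_option linter.unusedTactic false

namespace Stmt16X

noncomputable def A (α x₀ : ℝ) (n : ℤ) : ℝ := Int.fract (n * α + x₀)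

noncomputable def B (α x₀ : ℝ) (n : ℤ) : ℝ := 1 - A α x₀ n

open Classical in
noncomputable def rA (α x₀ : ℝ) : ℕ → ℕ
  | 0 => 0
  | n+1 => rA α x₀ n + (if 1 - α < A α x₀ n then 2 else 1)

open Classical in
noncomputable def lB (α x₀ : ℝ) : ℕ → ℕ
  | 0 => 0
  | 1 => 1
  | n+2 => lB α x₀ (n+1) + (if 1 - α < A α x₀ (-((n:ℤ)+2)) then 2 else 1)

noncomputable def tB (α x₀ : ℝ) (n : ℤ) : ℤ :=
  if 0 ≤ n then -(rA α x₀ n.toNat) - 1 else lB α x₀ (-n).toNat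

noncomputable def tA (α x₀ : ℝ) (n : ℤ) : ℤ := tB α x₀ n + 1

open Classical in
noncomputable def tau (α x₀ : ℝ) (x : ℝ) : ℤ :=
  if h : ∃ n, x = A α x₀ n then tA α x₀ h.choose
  else if h : ∃ n, x = B α x₀ n then tB α x₀ h.choose
  else 0

section

variable {α x₀ : ℝ}

lemma rA_ge (n : ℕ) : n ≤ rA α x₀ n := by
  induction n with
  | zero => simp [rA]
  | succ n ih => rw [rA]; split <;> omega

lemma lB_ge (n : ℕ) : n ≠ 0 → 1 ≤ lB α x₀ n ∧ n ≤ lB α x₀ n + 1 := by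
  induction n with
  | zero => simp
  | succ n ih =>
    intro _
    match n, ih with
    | 0, _ => simp [lB]
    | (m+1), ih => rw [lB]; split <;> (have := ih (by omega); omega)

lemma tA_zero_iff (n : ℤ) : tA α x₀ n = 0 ↔ n = 0 := by
  unfold tA tB
  split
  · next h =>
    have h2 := rA_ge (α := α) (x₀ := x₀) n.toNat
    constructor
    · intro he
      have h3 : rA α x₀ n.toNat = 0 := by omega
      omega
    · intro he; subst he; simp [rA]
  · next h =>
    have h2 := lB_ge (α := α) (x₀ := x₀) (-n).toNat (by omega)
    omega

lemma tB_ne_zero (n : ℤ) : tB α x₀ n ≠ 0 := by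
  unfold tB
  split
  · next h => omega
  · next h =>
    have h2 := lB_ge (α := α) (x₀ := x₀) (-n).toNat (by omega)
    omega

lemma tA_pos_iff (n : ℤ) : 0 < tA α x₀ n ↔ n < 0 := by
  unfold tA tB
  split
  · next h =>
    have h3 : (0:ℤ) ≤ rA α x₀ n.toNat := by positivity
    omega
  · next h =>
    have h2 := lB_ge (α := α) (x₀ := x₀) (-n).toNat (by omega)
    omega

lemma tB_pos_iff (n : ℤ) : 0 < tB α x₀ n ↔ n < 0 := by
  unfold tB
  split
  · next h =>
    have h3 : (0:ℤ) ≤ rA α x₀ n.toNat := by positivity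
    omega
  · next h =>
    have h2 := lB_ge (α := α) (x₀ := x₀) (-n).toNat (by omega)
    omega



lemma tB_zero : tB α x₀ 0 = -1 := by simp [tB, rA]

lemma tA_zero : tA α x₀ 0 = 0 := by simp [tA, tB_zero]

lemma tB_neg_one : tB α x₀ (-1) = 1 := by
  simp [tB, lB]

lemma tB_stepR (n : ℤ) (hn : 0 ≤ n) :
    tB α x₀ (n+1) = tB α x₀ n - (if 1 - α < A α x₀ n then 2 else 1) := by
  have h1 : (n+1).toNat = n.toNat + 1 := by omega
  have h2 : ((n.toNat : ℤ)) = n := Int.toNat_of_nonneg hn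
  rw [tB, tB, if_pos hn, if_pos (by omega : (0:ℤ) ≤ n + 1), h1, rA, h2]
  split <;> push_cast <;> ring

lemma tB_stepL (n : ℤ) (hn : n ≤ -1) :
    tB α x₀ (n-1) = tB α x₀ n + (if 1 - α < A α x₀ (n-1) then 2 else 1) := by
  obtain ⟨k, hk⟩ : ∃ k : ℕ, (-n).toNat = k + 1 := ⟨(-n).toNat - 1, by omega⟩
  have h1 : (-(n-1)).toNat = k + 2 := by omega
  have h2 : -((k:ℤ) + 2) = n - 1 := by omega
  rw [tB, tB, if_neg (by omega), if_neg (by omega), h1, hk, lB, h2]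
  split <;> push_cast <;> ring



lemma lB_eq_one {m : ℕ} (hm : 1 ≤ m) (h : lB α x₀ m = 1) : m = 1 := by
  match m, hm with
  | 1, _ => rfl
  | (k+2), _ =>
    exfalso
    have h1 := (lB_ge (α := α) (x₀ := x₀) (k+1) (by omega)).1
    rw [lB] at h
    split at h <;> omega

lemma rA_eq_one {m : ℕ} (h : rA α x₀ m = 1) : m = 1 ∧ rA α x₀ 1 = 1 := by
  match m with
  | 0 => simp [rA] at h
  | 1 => exact ⟨rfl, h⟩
  | (k+2) =>
    exfalso
    have h1 := rA_ge (α := α) (x₀ := x₀) (k+1)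
    rw [rA] at h
    split at h <;> omega


variable (h0 : 0 < α) (h1 : α < 1) (hx₀ : 0 < x₀) (hx₀α : x₀ < α)
variable (hgen : ∀ n n' ε ε' : ℤ, (ε = 1 ∨ ε = -1) → (ε' = 1 ∨ ε' = -1) →
      Int.fract ((n : ℝ) * α + ε * x₀) = Int.fract ((n' : ℝ) * α + ε' * x₀) →
      n = n' ∧ ε = ε')

include h0 h1 hx₀ hx₀α hgen


lemma A_ne_zero (n : ℤ) : A α x₀ n ≠ 0 := by
  intro h
  have hz : ((n : ℝ) * α + x₀) = ⌊(n : ℝ) * α + x₀⌋ := by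
    unfold A at h
    rw [Int.fract] at h
    linarith
  set m : ℤ := ⌊(n : ℝ) * α + x₀⌋ with hm
  have key : Int.fract ((0 : ℤ) * α + (1:ℤ) * x₀) = Int.fract (((-2*n : ℤ) : ℝ) * α + ((-1:ℤ) : ℝ) * x₀) := by
    apply Int.fract_eq_fract.mpr
    refine ⟨2 * m, ?_⟩
    push_cast
    push_cast at hz
    linarith
  have := hgen 0 (-2*n) 1 (-1) (Or.inl rfl) (Or.inr rfl) (by exact_mod_cast key)
  omega

lemma A_mem_Ioo (n : ℤ) : 0 < A α x₀ n ∧ A α x₀ n < 1 :=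
  ⟨lt_of_le_of_ne (Int.fract_nonneg _) (Ne.symm (A_ne_zero h0 h1 hx₀ hx₀α hgen n)), Int.fract_lt_one _⟩

lemma A_inj {n m : ℤ} (h : A α x₀ n = A α x₀ m) : n = m := by
  have := hgen n m 1 1 (Or.inl rfl) (Or.inl rfl) (by
    unfold A at h; push_cast; simpa using h)
  exact this.1

lemma A_add_A_ne_one (n m : ℤ) : A α x₀ n + A α x₀ m ≠ 1 := by
  intro h
  have h2 : A α x₀ n = Int.fract (-((m:ℝ) * α + x₀)) := by
    rw [Int.fract_neg (by unfold A at *; exact A_ne_zero h0 h1 hx₀ hx₀α hgen m)]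
    unfold A at h ⊢; linarith
  have := hgen n (-m) 1 (-1) (Or.inl rfl) (Or.inr rfl) (by
    unfold A at h2
    convert h2 using 2 <;> push_cast <;> ring)
  omega

lemma A_succ_fract (n : ℤ) : A α x₀ (n+1) = Int.fract (A α x₀ n + α) := by
  apply Int.fract_eq_fract.mpr
  refine ⟨⌊(n:ℝ) * α + x₀⌋, ?_⟩
  unfold A; rw [Int.fract]; push_cast; ring

lemma A_zero : A α x₀ 0 = x₀ := by
  unfold A
  rw [show ((0:ℤ):ℝ) * α + x₀ = x₀ by push_cast; ring]
  exact Int.fract_eq_self.mpr ⟨le_of_lt hx₀, by linarith⟩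

lemma A_step_lt {n : ℤ} (h : A α x₀ n < 1 - α) : A α x₀ (n+1) = A α x₀ n + α := by
  rw [A_succ_fract h0 h1 hx₀ hx₀α hgen n]
  exact Int.fract_eq_self.mpr ⟨by nlinarith [(A_mem_Ioo h0 h1 hx₀ hx₀α hgen n).1], by linarith⟩

lemma A_step_gt {n : ℤ} (h : 1 - α < A α x₀ n) : A α x₀ (n+1) = A α x₀ n + α - 1 := by
  rw [A_succ_fract h0 h1 hx₀ hx₀α hgen n, ← Int.fract_sub_intCast (A α x₀ n + α) (1:ℤ)]
  rw [show (A α x₀ n + α - ((1:ℤ):ℝ)) = A α x₀ n + α - 1 by push_cast; ring]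
  refine Int.fract_eq_self.mpr ⟨by linarith, by linarith [(A_mem_Ioo h0 h1 hx₀ hx₀α hgen n).2]⟩

lemma A_ne_sub (n : ℤ) : A α x₀ n ≠ 1 - α := by
  intro h
  have h2 := A_succ_fract h0 h1 hx₀ hx₀α hgen n
  rw [h] at h2
  rw [show (1 - α + α : ℝ) = 1 by ring] at h2
  simp at h2
  exact A_ne_zero h0 h1 hx₀ hx₀α hgen (n+1) h2

lemma A_ne_alpha (n : ℤ) : A α x₀ n ≠ α := by
  intro h
  rcases lt_trichotomy (A α x₀ (n-1)) (1-α) with hc | hc | hc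
  · have := A_step_lt h0 h1 hx₀ hx₀α hgen (n := n-1) hc
    simp at this
    rw [h] at this
    have h2 := (A_mem_Ioo h0 h1 hx₀ hx₀α hgen (n-1)).1
    linarith
  · exact A_ne_sub h0 h1 hx₀ hx₀α hgen (n-1) hc
  · have := A_step_gt h0 h1 hx₀ hx₀α hgen (n := n-1) hc
    simp at this
    rw [h] at this
    have h2 := (A_mem_Ioo h0 h1 hx₀ hx₀α hgen (n-1)).2
    linarith

lemma A_neg_one : A α x₀ (-1) = x₀ + 1 - α := by
  have h : A α x₀ (-1+1) = A α x₀ (-1) + α - 1 ∨ A α x₀ (-1+1) = A α x₀ (-1) + α := by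
    rcases lt_trichotomy (A α x₀ (-1)) (1-α) with hc | hc | hc
    · exact Or.inr (A_step_lt h0 h1 hx₀ hx₀α hgen hc)
    · exact absurd hc (A_ne_sub h0 h1 hx₀ hx₀α hgen (-1))
    · exact Or.inl (A_step_gt h0 h1 hx₀ hx₀α hgen hc)
  rw [show (-1:ℤ)+1 = 0 by ring, A_zero h0 h1 hx₀ hx₀α hgen] at h
  rcases h with h | h
  · linarith
  · exfalso
    have h2 := (A_mem_Ioo h0 h1 hx₀ hx₀α hgen (-1)).1
    linarith



lemma tau_A (n : ℤ) : tau α x₀ (A α x₀ n) = tA α x₀ n := by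
  unfold tau
  have h : ∃ m, A α x₀ n = A α x₀ m := ⟨n, rfl⟩
  rw [dif_pos h]
  have h4 := A_inj h0 h1 hx₀ hx₀α hgen h.choose_spec
  conv_rhs => rw [h4]

lemma tau_B (n : ℤ) : tau α x₀ (B α x₀ n) = tB α x₀ n := by
  unfold tau
  have h : ¬ ∃ m, B α x₀ n = A α x₀ m := by
    rintro ⟨m, hm⟩
    exact A_add_A_ne_one h0 h1 hx₀ hx₀α hgen m n (by unfold B at hm; linarith)
  rw [dif_neg h]
  have h2 : ∃ m, B α x₀ n = B α x₀ m := ⟨n, rfl⟩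
  rw [dif_pos h2]
  have h3 : A α x₀ n = A α x₀ h2.choose := by
    have := h2.choose_spec; unfold B at this; exact sub_right_injective this
  rw [← A_inj h0 h1 hx₀ hx₀α hgen h3]

-- previous-step relations
lemma prev_gt {n : ℤ} (h : A α x₀ n < α) : 1 - α < A α x₀ (n-1) := by
  rcases lt_or_gt_of_ne (A_ne_sub h0 h1 hx₀ hx₀α hgen (n-1)) with hc | hc
  · exfalso
    have := A_step_lt h0 h1 hx₀ hx₀α hgen hc
    rw [show n - 1 + 1 = n by ring] at this
    have := (A_mem_Ioo h0 h1 hx₀ hx₀α hgen (n-1)).1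
    rcases lt_or_gt_of_ne (A_ne_alpha h0 h1 hx₀ hx₀α hgen n) <;> linarith
  · exact hc

lemma prev_lt {n : ℤ} (h : α < A α x₀ n) : A α x₀ (n-1) < 1 - α := by
  rcases lt_or_gt_of_ne (A_ne_sub h0 h1 hx₀ hx₀α hgen (n-1)) with hc | hc
  · exact hc
  · exfalso
    have := A_step_gt h0 h1 hx₀ hx₀α hgen hc
    rw [show n - 1 + 1 = n by ring] at this
    have := (A_mem_Ioo h0 h1 hx₀ hx₀α hgen (n-1)).2
    linarith

-- the four tau computations
lemma M1 {n : ℤ} (h : A α x₀ n < α) : tB α x₀ (n-1) = tA α x₀ n + 1 := by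
  have hprev := prev_gt h0 h1 hx₀ hx₀α hgen h
  unfold tA
  rcases lt_trichotomy n 0 with hn | hn | hn
  · rw [tB_stepL (α:=α) (x₀:=x₀) n (by omega), if_pos hprev] <;> ring
  · subst hn; rw [tB_zero, show (0:ℤ)-1 = -1 by ring, tB_neg_one]; ring
  · have := tB_stepR (α:=α) (x₀:=x₀) (n-1) (by omega)
    rw [show n - 1 + 1 = n by ring, if_pos hprev] at this
    omega

lemma M2 {n : ℤ} (h : α < A α x₀ n) : tA α x₀ (n-1) = tA α x₀ n + 1 := by
  have hprev := prev_lt h0 h1 hx₀ hx₀α hgen h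
  unfold tA
  rcases lt_trichotomy n 0 with hn | hn | hn
  · rw [tB_stepL (α:=α) (x₀:=x₀) n (by omega), if_neg (by exact not_lt.mpr (le_of_lt hprev))] <;> ring
  · exfalso; subst hn; rw [A_zero h0 h1 hx₀ hx₀α hgen] at h; linarith
  · have := tB_stepR (α:=α) (x₀:=x₀) (n-1) (by omega)
    rw [show n - 1 + 1 = n by ring, if_neg (not_lt.mpr (le_of_lt hprev))] at this
    omega

lemma M3 {n : ℤ} (h : 1 - α < A α x₀ n) : tA α x₀ (n+1) = tB α x₀ n - 1 := by
  unfold tA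
  rcases lt_trichotomy n (-1) with hn | hn | hn
  · have := tB_stepL (α:=α) (x₀:=x₀) (n+1) (by omega)
    rw [show n + 1 - 1 = n by ring, if_pos h] at this
    omega
  · subst hn; rw [show (-1:ℤ)+1 = 0 by ring, tB_zero, tB_neg_one]; ring
  · rw [tB_stepR (α:=α) (x₀:=x₀) n (by omega), if_pos h] <;> ring

lemma M4 {n : ℤ} (h : A α x₀ n < 1 - α) : tB α x₀ (n+1) = tB α x₀ n - 1 := by
  rcases lt_trichotomy n (-1) with hn | hn | hn
  · have := tB_stepL (α:=α) (x₀:=x₀) (n+1) (by omega)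
    rw [show n + 1 - 1 = n by ring, if_neg (not_lt.mpr (le_of_lt h))] at this
    omega
  · exfalso; subst hn; rw [A_neg_one h0 h1 hx₀ hx₀α hgen] at h; linarith
  · rw [tB_stepR (α:=α) (x₀:=x₀) n (by omega), if_neg (not_lt.mpr (le_of_lt h))] <;> ring

-- value computations for the maps
lemma val_f1_A (n : ℤ) : |1 - A α x₀ n| = B α x₀ n := by
  unfold B; rw [abs_of_pos]; linarith [(A_mem_Ioo h0 h1 hx₀ hx₀α hgen n).2]

lemma val_f1_B (n : ℤ) : |1 - B α x₀ n| = A α x₀ n := by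
  unfold B; rw [show (1 - (1 - A α x₀ n)) = A α x₀ n by ring, abs_of_pos (A_mem_Ioo h0 h1 hx₀ hx₀α hgen n).1]

lemma val_fa_A_lt {n : ℤ} (h : A α x₀ n < α) : |α - A α x₀ n| = B α x₀ (n-1) := by
  have hprev := prev_gt h0 h1 hx₀ hx₀α hgen h
  have hstep := A_step_gt h0 h1 hx₀ hx₀α hgen hprev
  rw [show n - 1 + 1 = n by ring] at hstep
  unfold B; rw [abs_of_pos (by linarith)]; linarith

lemma val_fa_A_gt {n : ℤ} (h : α < A α x₀ n) : |α - A α x₀ n| = A α x₀ (n-1) := by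
  have hprev := prev_lt h0 h1 hx₀ hx₀α hgen h
  have hstep := A_step_lt h0 h1 hx₀ hx₀α hgen hprev
  rw [show n - 1 + 1 = n by ring] at hstep
  rw [abs_of_neg (by linarith)]; linarith

lemma val_fa_B_lt {n : ℤ} (h : B α x₀ n < α) : |α - B α x₀ n| = A α x₀ (n+1) := by
  have hc : 1 - α < A α x₀ n := by unfold B at h; linarith
  have hstep := A_step_gt h0 h1 hx₀ hx₀α hgen hc
  unfold B at *; rw [abs_of_pos (by linarith)]; linarith

lemma val_fa_B_gt {n : ℤ} (h : α < B α x₀ n) : |α - B α x₀ n| = B α x₀ (n+1) := by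
  have hc : A α x₀ n < 1 - α := by unfold B at h; linarith
  have hstep := A_step_lt h0 h1 hx₀ hx₀α hgen hc
  unfold B at *; rw [abs_of_neg (by linarith)]; linarith



-- ######################## graph layer ########################

variable {O : Set ℝ}
variable (hO : O = {y | ∃ n ε : ℤ, (ε = 1 ∨ ε = -1) ∧ y = Int.fract ((n : ℝ) * α + ε * x₀)})
variable {G : SimpleGraph O}
variable (hG : G = SimpleGraph.fromRel
      (fun u v : O => |α - (u : ℝ)| = (v : ℝ) ∨ |1 - (u : ℝ)| = (v : ℝ)))
variable {v₀ : O} (hv₀ : (v₀ : ℝ) = x₀)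

include hO hG hv₀

lemma memA (n : ℤ) : A α x₀ n ∈ O := by
  rw [hO]
  refine ⟨n, 1, Or.inl rfl, ?_⟩
  unfold A; norm_num

lemma memB (n : ℤ) : B α x₀ n ∈ O := by
  rw [hO]
  refine ⟨-n, -1, Or.inr rfl, ?_⟩
  have h2 : ((-n : ℤ) : ℝ) * α + ((-1 : ℤ) : ℝ) * x₀ = -(((n : ℤ) : ℝ) * α + x₀) := by
    push_cast; ring
  rw [h2, Int.fract_neg (A_ne_zero h0 h1 hx₀ hx₀α hgen n)]
  unfold B A; ring

lemma mem_rep {x : ℝ} (hx : x ∈ O) :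
    (∃ n, x = A α x₀ n) ∨ (∃ n, x = B α x₀ n) := by
  rw [hO] at hx
  obtain ⟨n, ε, hε, hx⟩ := hx
  rcases hε with hε | hε
  · subst hε; left; exact ⟨n, by rw [hx]; unfold A; norm_num⟩
  · subst hε; right
    refine ⟨-n, ?_⟩
    rw [hx]
    unfold B
    have h2 : ((n : ℤ) : ℝ) * α + ((-1 : ℤ) : ℝ) * x₀ = -((((-n) : ℤ) : ℝ) * α + x₀) := by
      push_cast; ring
    rw [h2, Int.fract_neg (A_ne_zero h0 h1 hx₀ hx₀α hgen (-n))]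
    unfold A; ring

lemma v0_val : (v₀ : ℝ) = A α x₀ 0 := by
  rw [hv₀, A_zero h0 h1 hx₀ hx₀α hgen]

lemma tau_v0 : tau α x₀ (v₀ : ℝ) = 0 := by
  rw [v0_val h0 h1 hx₀ hx₀α hgen hO hG hv₀, tau_A h0 h1 hx₀ hx₀α hgen, tA_zero]

lemma tau_zero_iff {u : O} : tau α x₀ (u : ℝ) = 0 ↔ u = v₀ := by
  constructor
  · intro h
    rcases mem_rep h0 h1 hx₀ hx₀α hgen hO hG hv₀ u.2 with ⟨n, hn⟩ | ⟨n, hn⟩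
    · rw [hn, tau_A h0 h1 hx₀ hx₀α hgen, tA_zero_iff] at h
      subst h
      exact Subtype.ext (by rw [hn, v0_val h0 h1 hx₀ hx₀α hgen hO hG hv₀])
    · rw [hn, tau_B h0 h1 hx₀ hx₀α hgen] at h
      exact absurd h (tB_ne_zero n)
  · intro h; subst h; exact tau_v0 h0 h1 hx₀ hx₀α hgen hO hG hv₀

lemma master {x : ℝ} (hx : x ∈ O) :
    |α - x| ∈ O ∧ |1 - x| ∈ O ∧
    ((tau α x₀ |α - x| = tau α x₀ x + 1 ∧ tau α x₀ |1 - x| = tau α x₀ x - 1) ∨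
     (tau α x₀ |α - x| = tau α x₀ x - 1 ∧ tau α x₀ |1 - x| = tau α x₀ x + 1)) := by
  rcases mem_rep h0 h1 hx₀ hx₀α hgen hO hG hv₀ hx with ⟨n, hn⟩ | ⟨n, hn⟩
  · subst hn
    rcases lt_or_gt_of_ne (A_ne_alpha h0 h1 hx₀ hx₀α hgen n) with hc | hc
    · rw [val_fa_A_lt h0 h1 hx₀ hx₀α hgen hc, val_f1_A h0 h1 hx₀ hx₀α hgen,
        tau_A h0 h1 hx₀ hx₀α hgen, tau_B h0 h1 hx₀ hx₀α hgen, tau_B h0 h1 hx₀ hx₀α hgen]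
      exact ⟨memB h0 h1 hx₀ hx₀α hgen hO hG hv₀ _, memB h0 h1 hx₀ hx₀α hgen hO hG hv₀ _,
        Or.inl ⟨M1 h0 h1 hx₀ hx₀α hgen hc, by unfold tA; ring⟩⟩
    · rw [val_fa_A_gt h0 h1 hx₀ hx₀α hgen hc, val_f1_A h0 h1 hx₀ hx₀α hgen,
        tau_A h0 h1 hx₀ hx₀α hgen, tau_A h0 h1 hx₀ hx₀α hgen, tau_B h0 h1 hx₀ hx₀α hgen]
      exact ⟨memA h0 h1 hx₀ hx₀α hgen hO hG hv₀ _, memB h0 h1 hx₀ hx₀α hgen hO hG hv₀ _,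
        Or.inl ⟨M2 h0 h1 hx₀ hx₀α hgen hc, by unfold tA; ring⟩⟩
  · subst hn
    have hBne : B α x₀ n ≠ α := by
      intro h
      exact A_ne_sub h0 h1 hx₀ hx₀α hgen n (by unfold B at h; linarith)
    rcases lt_or_gt_of_ne hBne with hc | hc
    · rw [val_fa_B_lt h0 h1 hx₀ hx₀α hgen hc, val_f1_B h0 h1 hx₀ hx₀α hgen,
        tau_B h0 h1 hx₀ hx₀α hgen, tau_A h0 h1 hx₀ hx₀α hgen, tau_A h0 h1 hx₀ hx₀α hgen]
      exact ⟨memA h0 h1 hx₀ hx₀α hgen hO hG hv₀ _, memA h0 h1 hx₀ hx₀α hgen hO hG hv₀ _,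
        Or.inr ⟨M3 h0 h1 hx₀ hx₀α hgen (by unfold B at hc; linarith), by unfold tA; ring⟩⟩
    · rw [val_fa_B_gt h0 h1 hx₀ hx₀α hgen hc, val_f1_B h0 h1 hx₀ hx₀α hgen,
        tau_B h0 h1 hx₀ hx₀α hgen, tau_B h0 h1 hx₀ hx₀α hgen, tau_A h0 h1 hx₀ hx₀α hgen]
      exact ⟨memB h0 h1 hx₀ hx₀α hgen hO hG hv₀ _, memA h0 h1 hx₀ hx₀α hgen hO hG hv₀ _,
        Or.inr ⟨M4 h0 h1 hx₀ hx₀α hgen (by unfold B at hc; linarith), by unfold tA; ring⟩⟩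

lemma adj_of_fa {x : ℝ} (hx : x ∈ O) (hm : |α - x| ∈ O) (hne : |α - x| ≠ x) :
    G.Adj ⟨x, hx⟩ ⟨|α - x|, hm⟩ := by
  subst hG
  rw [SimpleGraph.fromRel_adj]
  exact ⟨fun h => hne (congrArg Subtype.val h).symm, Or.inl (Or.inl rfl)⟩

lemma adj_of_f1 {x : ℝ} (hx : x ∈ O) (hm : |1 - x| ∈ O) (hne : |1 - x| ≠ x) :
    G.Adj ⟨x, hx⟩ ⟨|1 - x|, hm⟩ := by
  subst hG
  rw [SimpleGraph.fromRel_adj]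
  exact ⟨fun h => hne (congrArg Subtype.val h).symm, Or.inl (Or.inr rfl)⟩

lemma adj_tau {u v : O} (h : G.Adj u v) :
    tau α x₀ (v : ℝ) = tau α x₀ (u : ℝ) + 1 ∨ tau α x₀ (v : ℝ) = tau α x₀ (u : ℝ) - 1 := by
  rw [hG, SimpleGraph.fromRel_adj] at h
  obtain ⟨hne, h | h⟩ := h
  · rcases h with h | h
    · have := (master h0 h1 hx₀ hx₀α hgen hO hG hv₀ u.2).2.2
      rw [h] at this
      omega
    · have := (master h0 h1 hx₀ hx₀α hgen hO hG hv₀ u.2).2.2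
      rw [h] at this
      omega
  · rcases h with h | h
    · have := (master h0 h1 hx₀ hx₀α hgen hO hG hv₀ v.2).2.2
      rw [h] at this
      omega
    · have := (master h0 h1 hx₀ hx₀α hgen hO hG hv₀ v.2).2.2
      rw [h] at this
      omega

lemma walk_ge {u v : O} (p : G.Walk u v) :
    (tau α x₀ (u : ℝ) - tau α x₀ (v : ℝ)).natAbs ≤ p.length := by
  induction p with
  | nil => simp
  | cons h p ih =>
    have := adj_tau h0 h1 hx₀ hx₀α hgen hO hG hv₀ h
    rw [SimpleGraph.Walk.length_cons]
    omega

-- one step towards v₀ / away from v₀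
lemma descend {u : O} (hne : tau α x₀ (u : ℝ) ≠ 0) :
    ∃ w : O, G.Adj w u ∧
      ((0 < tau α x₀ (u : ℝ) → tau α x₀ (w : ℝ) = tau α x₀ (u : ℝ) - 1) ∧
       (tau α x₀ (u : ℝ) < 0 → tau α x₀ (w : ℝ) = tau α x₀ (u : ℝ) + 1)) := by
  obtain ⟨hma, hm1, hd⟩ := master h0 h1 hx₀ hx₀α hgen hO hG hv₀ u.2
  have hane : |α - (u : ℝ)| ≠ (u : ℝ) := by
    intro h; rw [h] at hd; omega
  have h1ne : |1 - (u : ℝ)| ≠ (u : ℝ) := by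
    intro h; rw [h] at hd; omega
  have hadja := (adj_of_fa h0 h1 hx₀ hx₀α hgen hO hG hv₀ u.2 hma hane).symm
  have hadj1 := (adj_of_f1 h0 h1 hx₀ hx₀α hgen hO hG hv₀ u.2 hm1 h1ne).symm
  rcases hd with ⟨ha, hb⟩ | ⟨ha, hb⟩
  · rcases lt_or_gt_of_ne hne with hc | hc
    · exact ⟨⟨|α - (u : ℝ)|, hma⟩, hadja, by constructor <;> intro <;> simp <;> omega⟩
    · exact ⟨⟨|1 - (u : ℝ)|, hm1⟩, hadj1, by constructor <;> intro <;> simp <;> omega⟩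
  · rcases lt_or_gt_of_ne hne with hc | hc
    · exact ⟨⟨|1 - (u : ℝ)|, hm1⟩, hadj1, by constructor <;> intro <;> simp <;> omega⟩
    · exact ⟨⟨|α - (u : ℝ)|, hma⟩, hadja, by constructor <;> intro <;> simp <;> omega⟩

lemma exists_walk : ∀ (k : ℕ) (u : O), (tau α x₀ (u : ℝ)).natAbs = k →
    ∃ p : G.Walk v₀ u, p.length = k := by
  intro k
  induction k with
  | zero =>
    intro u hu
    have : u = v₀ := (tau_zero_iff h0 h1 hx₀ hx₀α hgen hO hG hv₀).mp (by omega)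
    subst this
    exact ⟨SimpleGraph.Walk.nil, rfl⟩
  | succ k ih =>
    intro u hu
    obtain ⟨w, hadj, hw1, hw2⟩ := descend h0 h1 hx₀ hx₀α hgen hO hG hv₀
      (u := u) (by omega)
    have hwk : (tau α x₀ (w : ℝ)).natAbs = k := by
      rcases lt_trichotomy (tau α x₀ (u : ℝ)) 0 with hc | hc | hc
      · have := hw2 hc; omega
      · omega
      · have := hw1 hc; omega
    obtain ⟨p, hp⟩ := ih w hwk
    exact ⟨p.concat hadj, by rw [SimpleGraph.Walk.length_concat, hp]⟩

lemma dist_eq (u : O) : G.dist v₀ u = (tau α x₀ (u : ℝ)).natAbs := by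
  obtain ⟨p, hp⟩ := exists_walk h0 h1 hx₀ hx₀α hgen hO hG hv₀ _ u rfl
  refine le_antisymm (hp ▸ SimpleGraph.dist_le p) ?_
  obtain ⟨q, hq⟩ := SimpleGraph.Reachable.exists_walk_length_eq_dist ⟨p⟩
  have := walk_ge h0 h1 hx₀ hx₀α hgen hO hG hv₀ q
  rw [hq] at this
  rw [tau_v0 h0 h1 hx₀ hx₀α hgen hO hG hv₀] at this
  omega


-- ######################## components layer ########################

lemma adj_f1' {x y : ℝ} (hx : x ∈ O) (hy : y ∈ O) (h : |1 - x| = y) (hne : y ≠ x) :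
    G.Adj ⟨x, hx⟩ ⟨y, hy⟩ := by
  subst h
  exact adj_of_f1 h0 h1 hx₀ hx₀α hgen hO hG hv₀ hx hy hne

lemma adj_fa' {x y : ℝ} (hx : x ∈ O) (hy : y ∈ O) (h : |α - x| = y) (hne : y ≠ x) :
    G.Adj ⟨x, hx⟩ ⟨y, hy⟩ := by
  subst h
  exact adj_of_fa h0 h1 hx₀ hx₀α hgen hO hG hv₀ hx hy hne

lemma ne_v0_of_tau_ne {u : O} (h : tau α x₀ (u : ℝ) ≠ 0) : u ≠ v₀ :=
  fun he => h ((tau_zero_iff h0 h1 hx₀ hx₀α hgen hO hG hv₀).mpr he)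

lemma tau_vB0 : tau α x₀ (B α x₀ 0) = -1 := by
  rw [tau_B h0 h1 hx₀ hx₀α hgen, tB_zero]

lemma tau_vBm1 : tau α x₀ (B α x₀ (-1)) = 1 := by
  rw [tau_B h0 h1 hx₀ hx₀α hgen, tB_neg_one]

lemma tau_one_char {u : O} (h : tau α x₀ (u : ℝ) = 1) : (u : ℝ) = B α x₀ (-1) := by
  rcases mem_rep h0 h1 hx₀ hx₀α hgen hO hG hv₀ u.2 with ⟨n, hn⟩ | ⟨n, hn⟩
  · rw [hn, tau_A h0 h1 hx₀ hx₀α hgen] at h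
    unfold tA at h
    exact absurd (by omega) (tB_ne_zero (α := α) (x₀ := x₀) n)
  · rw [hn, tau_B h0 h1 hx₀ hx₀α hgen] at h
    unfold tB at h
    split at h
    · have : (0:ℤ) ≤ rA α x₀ n.toNat := by positivity
      omega
    · next hneg =>
      have h2 : lB α x₀ (-n).toNat = 1 := by omega
      have h3 := lB_eq_one (α := α) (x₀ := x₀) (m := (-n).toNat) (by omega) h2
      have : n = -1 := by omega
      rw [hn, this]

lemma tau_neg_one_char {u : O} (h : tau α x₀ (u : ℝ) = -1) :
    (u : ℝ) = B α x₀ 0 ∨ ((u : ℝ) = A α x₀ 1 ∧ x₀ < 1 - α) := by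
  rcases mem_rep h0 h1 hx₀ hx₀α hgen hO hG hv₀ u.2 with ⟨n, hn⟩ | ⟨n, hn⟩
  · rw [hn, tau_A h0 h1 hx₀ hx₀α hgen] at h
    unfold tA tB at h
    split at h
    · next hpos =>
      have h2 : rA α x₀ n.toNat = 1 := by omega
      obtain ⟨h3, h4⟩ := rA_eq_one (α := α) (x₀ := x₀) h2
      have hn1 : n = 1 := by omega
      right
      refine ⟨by rw [hn, hn1], ?_⟩
      rw [rA, rA] at h4
      split at h4
      · omega
      · next hcond =>
        have := A_zero h0 h1 hx₀ hx₀α hgen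
        have h5 : A α x₀ ((0:ℕ) : ℤ) ≤ 1 - α := not_lt.mp hcond
        have h6 : A α x₀ 0 ≠ 1 - α := A_ne_sub h0 h1 hx₀ hx₀α hgen 0
        have h7 : A α x₀ ((0:ℕ) : ℤ) = A α x₀ 0 := by norm_num
        rw [h7] at h5
        rw [this] at h5 h6
        exact lt_of_le_of_ne h5 h6
    · next hneg =>
      have h2 := (lB_ge (α := α) (x₀ := x₀) (-n).toNat (by omega)).1
      omega
  · rw [hn, tau_B h0 h1 hx₀ hx₀α hgen] at h
    unfold tB at h
    split at h
    · next hpos =>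
      have h2 : rA α x₀ n.toNat = 0 := by omega
      have h3 : n.toNat = 0 := by
        by_contra hc
        have := rA_ge (α := α) (x₀ := x₀) n.toNat
        omega
      left
      have : n = 0 := by omega
      rw [hn, this]
    · next hneg =>
      have h2 := (lB_ge (α := α) (x₀ := x₀) (-n).toNat (by omega)).1
      omega

lemma induced_adj {u v : O} (hu : u ≠ v₀) (hv : v ≠ v₀) (h : G.Adj u v) :
    (SimpleGraph.induce {w : O | w ≠ v₀} G).Adj ⟨u, hu⟩ ⟨v, hv⟩ := h

lemma walk_sign {a b : ↥{w : O | w ≠ v₀}}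
    (p : (SimpleGraph.induce {w : O | w ≠ v₀} G).Walk a b) :
    (0 < tau α x₀ (a.1 : ℝ) ↔ 0 < tau α x₀ (b.1 : ℝ)) := by
  induction p with
  | nil => exact Iff.rfl
  | @cons a c b h p ih =>
    have hadj : G.Adj a.1 c.1 := h
    have hstep := adj_tau h0 h1 hx₀ hx₀α hgen hO hG hv₀ hadj
    have ha : tau α x₀ (a.1 : ℝ) ≠ 0 :=
      fun he => a.2 ((tau_zero_iff h0 h1 hx₀ hx₀α hgen hO hG hv₀).mp he)
    have hc : tau α x₀ (c.1 : ℝ) ≠ 0 :=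
      fun he => c.2 ((tau_zero_iff h0 h1 hx₀ hx₀α hgen hO hG hv₀).mp he)
    rw [← ih]
    omega

lemma reach_pos : ∀ (k : ℕ) (u : O) (hu : 0 < tau α x₀ (u : ℝ))
    (hk : (tau α x₀ (u : ℝ)).natAbs = k)
    (hB : B α x₀ (-1) ∈ O) (hBne : (⟨B α x₀ (-1), hB⟩ : O) ≠ v₀),
    (SimpleGraph.induce {w : O | w ≠ v₀} G).Reachable
      ⟨u, ne_v0_of_tau_ne h0 h1 hx₀ hx₀α hgen hO hG hv₀ (by omega)⟩
      ⟨⟨B α x₀ (-1), hB⟩, hBne⟩ := by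
  intro k
  induction k using Nat.strong_induction_on with
  | _ k ih =>
    intro u hu hk hB hBne
    rcases eq_or_lt_of_le (show (1:ℤ) ≤ tau α x₀ (u : ℝ) by omega) with heq | hgt
    · -- tau u = 1
      have hval : (u : ℝ) = B α x₀ (-1) :=
        tau_one_char h0 h1 hx₀ hx₀α hgen hO hG hv₀ (by omega)
      have he : u = (⟨B α x₀ (-1), hB⟩ : O) := Subtype.ext hval
      subst he
      exact SimpleGraph.Reachable.refl _
    · -- tau u ≥ 2
      obtain ⟨w, hadj, hw1, _⟩ := descend h0 h1 hx₀ hx₀α hgen hO hG hv₀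
        (u := u) (by omega)
      have hwt := hw1 (by omega)
      have hwpos : 0 < tau α x₀ (w : ℝ) := by omega
      have hwk : (tau α x₀ (w : ℝ)).natAbs = k - 1 := by omega
      have hrw := ih (k-1) (by omega) w hwpos hwk hB hBne
      refine SimpleGraph.Reachable.trans ?_ hrw
      exact (induced_adj h0 h1 hx₀ hx₀α hgen hO hG hv₀ _ _ hadj.symm).reachable


lemma reach_neg : ∀ (k : ℕ) (u : O) (hu : tau α x₀ (u : ℝ) < 0)
    (hk : (tau α x₀ (u : ℝ)).natAbs = k)
    (hB : B α x₀ 0 ∈ O) (hBne : (⟨B α x₀ 0, hB⟩ : O) ≠ v₀),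
    (SimpleGraph.induce {w : O | w ≠ v₀} G).Reachable
      ⟨u, ne_v0_of_tau_ne h0 h1 hx₀ hx₀α hgen hO hG hv₀ (by omega)⟩
      ⟨⟨B α x₀ 0, hB⟩, hBne⟩ := by
  intro k
  induction k using Nat.strong_induction_on with
  | _ k ih =>
    intro u hu hk hB hBne
    by_cases hone : tau α x₀ (u : ℝ) = -1
    · rcases tau_neg_one_char h0 h1 hx₀ hx₀α hgen hO hG hv₀ hone with hval | ⟨hval, hcond⟩
      · have he : u = (⟨B α x₀ 0, hB⟩ : O) := Subtype.ext hval
        subst he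
        exact SimpleGraph.Reachable.refl _
      · have hmA1 : A α x₀ 1 ∈ O := memA h0 h1 hx₀ hx₀α hgen hO hG hv₀ 1
        have hmB1 : B α x₀ 1 ∈ O := memB h0 h1 hx₀ hx₀α hgen hO hG hv₀ 1
        have he : u = (⟨A α x₀ 1, hmA1⟩ : O) := Subtype.ext hval
        have e1 : G.Adj ⟨A α x₀ 1, hmA1⟩ ⟨B α x₀ 1, hmB1⟩ :=
          adj_f1' h0 h1 hx₀ hx₀α hgen hO hG hv₀ hmA1 hmB1
            (val_f1_A h0 h1 hx₀ hx₀α hgen 1)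
            (fun hc => A_add_A_ne_one h0 h1 hx₀ hx₀α hgen 1 1
              (by unfold B at hc; linarith))
        have hgt : α < B α x₀ 0 := by
          unfold B
          rw [A_zero h0 h1 hx₀ hx₀α hgen]
          linarith
        have e2 : G.Adj ⟨B α x₀ 0, hB⟩ ⟨B α x₀ 1, hmB1⟩ :=
          adj_fa' h0 h1 hx₀ hx₀α hgen hO hG hv₀ hB hmB1
            (val_fa_B_gt h0 h1 hx₀ hx₀α hgen hgt)
            (fun hc => by
              have : A α x₀ 1 = A α x₀ 0 := by unfold B at hc; linarith
              have := A_inj h0 h1 hx₀ hx₀α hgen this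
              omega)
        have hB1ne : (⟨B α x₀ 1, hmB1⟩ : O) ≠ v₀ :=
          ne_v0_of_tau_ne h0 h1 hx₀ hx₀α hgen hO hG hv₀
            (by rw [tau_B h0 h1 hx₀ hx₀α hgen]; exact tB_ne_zero 1)
        subst he
        refine SimpleGraph.Reachable.trans
          (SimpleGraph.Adj.reachable
            (induced_adj h0 h1 hx₀ hx₀α hgen hO hG hv₀ _ hB1ne e1))
          (SimpleGraph.Reachable.symm (SimpleGraph.Adj.reachable
            (induced_adj h0 h1 hx₀ hx₀α hgen hO hG hv₀ hBne hB1ne e2)))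
    · obtain ⟨w, hadj, _, hw2⟩ := descend h0 h1 hx₀ hx₀α hgen hO hG hv₀
        (u := u) (by omega)
      have hwt := hw2 (by omega)
      have hwneg : tau α x₀ (w : ℝ) < 0 := by omega
      have hwk : (tau α x₀ (w : ℝ)).natAbs = k - 1 := by omega
      have hrw := ih (k-1) (by omega) w hwneg hwk hB hBne
      refine SimpleGraph.Reachable.trans ?_ hrw
      exact (induced_adj h0 h1 hx₀ hx₀α hgen hO hG hv₀ _ _ hadj.symm).reachable

lemma reach_iff {u v : O} (hu : u ≠ v₀) (hv : v ≠ v₀) :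
    (SimpleGraph.induce {w : O | w ≠ v₀} G).Reachable ⟨u, hu⟩ ⟨v, hv⟩ ↔
      (0 < tau α x₀ (u : ℝ) ↔ 0 < tau α x₀ (v : ℝ)) := by
  constructor
  · intro h
    obtain ⟨p⟩ := h
    exact walk_sign h0 h1 hx₀ hx₀α hgen hO hG hv₀ p
  · intro hs
    have hut : tau α x₀ (u : ℝ) ≠ 0 :=
      fun he => hu ((tau_zero_iff h0 h1 hx₀ hx₀α hgen hO hG hv₀).mp he)
    have hvt : tau α x₀ (v : ℝ) ≠ 0 :=
      fun he => hv ((tau_zero_iff h0 h1 hx₀ hx₀α hgen hO hG hv₀).mp he)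
    by_cases hpos : 0 < tau α x₀ (u : ℝ)
    · have hvpos : 0 < tau α x₀ (v : ℝ) := hs.mp hpos
      have hB : B α x₀ (-1) ∈ O := memB h0 h1 hx₀ hx₀α hgen hO hG hv₀ (-1)
      have hBne : (⟨B α x₀ (-1), hB⟩ : O) ≠ v₀ :=
        ne_v0_of_tau_ne h0 h1 hx₀ hx₀α hgen hO hG hv₀
          (by rw [tau_vBm1 h0 h1 hx₀ hx₀α hgen hO hG hv₀]; omega)
      have r1 := reach_pos h0 h1 hx₀ hx₀α hgen hO hG hv₀ _ u hpos rfl hB hBne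
      have r2 := reach_pos h0 h1 hx₀ hx₀α hgen hO hG hv₀ _ v hvpos rfl hB hBne
      exact r1.trans r2.symm
    · have hvneg : tau α x₀ (v : ℝ) < 0 := by
        have : ¬ 0 < tau α x₀ (v : ℝ) := fun hc => hpos (hs.mpr hc)
        omega
      have huneg : tau α x₀ (u : ℝ) < 0 := by omega
      have hB : B α x₀ 0 ∈ O := memB h0 h1 hx₀ hx₀α hgen hO hG hv₀ 0
      have hBne : (⟨B α x₀ 0, hB⟩ : O) ≠ v₀ :=
        ne_v0_of_tau_ne h0 h1 hx₀ hx₀α hgen hO hG hv₀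
          (by rw [tau_vB0 h0 h1 hx₀ hx₀α hgen hO hG hv₀]; omega)
      have r1 := reach_neg h0 h1 hx₀ hx₀α hgen hO hG hv₀ _ u huneg rfl hB hBne
      have r2 := reach_neg h0 h1 hx₀ hx₀α hgen hO hG hv₀ _ v hvneg rfl hB hBne
      exact r1.trans r2.symm

lemma rho_eq (ρ : ℝ → ℤ) (hρ₀ : ρ x₀ = 0)
    (hρd : ∀ v : O, (ρ (v : ℝ)).natAbs = G.dist v₀ v)
    (hρs : ∀ (u v : O) (hu : u ≠ v₀) (hv : v ≠ v₀),
      (SimpleGraph.induce {w : O | w ≠ v₀} G).Reachable ⟨u, hu⟩ ⟨v, hv⟩ ↔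
        (0 < ρ (u : ℝ) ↔ 0 < ρ (v : ℝ))) :
    ∃ c : ℤ, (c = 1 ∨ c = -1) ∧ ∀ x ∈ O, ρ x = c * tau α x₀ x := by
  have hB : B α x₀ 0 ∈ O := memB h0 h1 hx₀ hx₀α hgen hO hG hv₀ 0
  have htB0 : tau α x₀ (B α x₀ 0) = -1 := tau_vB0 h0 h1 hx₀ hx₀α hgen hO hG hv₀
  have hBne : (⟨B α x₀ 0, hB⟩ : O) ≠ v₀ :=
    ne_v0_of_tau_ne h0 h1 hx₀ hx₀α hgen hO hG hv₀
      (by rw [show ((⟨B α x₀ 0, hB⟩ : O) : ℝ) = B α x₀ 0 from rfl, htB0]; omega)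
  have hρB : (ρ (B α x₀ 0)).natAbs = 1 := by
    have := hρd ⟨B α x₀ 0, hB⟩
    rw [dist_eq h0 h1 hx₀ hx₀α hgen hO hG hv₀] at this
    simpa [htB0] using this
  refine ⟨if 0 < ρ (B α x₀ 0) then -1 else 1, by split <;> simp, ?_⟩
  intro x hx
  by_cases hx0 : (⟨x, hx⟩ : O) = v₀
  · have hxv : x = x₀ := by
      have := congrArg Subtype.val hx0
      simpa [hv₀] using this
    have hτ : tau α x₀ x = 0 := by
      have h5 := tau_v0 h0 h1 hx₀ hx₀α hgen hO hG hv₀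
      rw [hv₀] at h5
      rw [hxv, h5]
    rw [hτ, hxv, hρ₀]; ring
  · have hτne : tau α x₀ x ≠ 0 :=
      fun he => hx0 ((tau_zero_iff h0 h1 hx₀ hx₀α hgen hO hG hv₀ (u := ⟨x, hx⟩)).mp he)
    have habs : (ρ x).natAbs = (tau α x₀ x).natAbs := by
      have := hρd ⟨x, hx⟩
      rw [dist_eq h0 h1 hx₀ hx₀α hgen hO hG hv₀] at this
      simpa using this
    have h2 := (reach_iff h0 h1 hx₀ hx₀α hgen hO hG hv₀ hx0 hBne).symm.trans
      (hρs ⟨x, hx⟩ ⟨B α x₀ 0, hB⟩ hx0 hBne)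
    simp only [htB0] at h2
    -- h2 : (0 < tau x ↔ 0 < -1) ↔ (0 < ρ x ↔ 0 < ρ (B 0))
    have h3 : (¬ 0 < tau α x₀ x) ↔ (0 < ρ x ↔ 0 < ρ (B α x₀ 0)) := by
      constructor
      · intro hn
        exact h2.mp (by constructor <;> intro hh <;> [exact absurd hh hn; omega])
      · intro hh
        intro hcon
        have := h2.mpr hh |>.mp hcon
        omega
    by_cases hq : 0 < tau α x₀ x
    · have h4 : ¬ (0 < ρ x ↔ 0 < ρ (B α x₀ 0)) := fun hc => (h3.mpr hc) hq
      by_cases hr : 0 < ρ (B α x₀ 0)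
      · rw [if_pos hr]
        have : ¬ 0 < ρ x := fun hc => h4 ⟨fun _ => hr, fun _ => hc⟩
        omega
      · rw [if_neg hr]
        have : 0 < ρ x := by
          by_contra hc
          exact h4 ⟨fun hh => absurd hh hc, fun hh => absurd hh hr⟩
        omega
    · have h4 : (0 < ρ x ↔ 0 < ρ (B α x₀ 0)) := h3.mp hq
      by_cases hr : 0 < ρ (B α x₀ 0)
      · rw [if_pos hr]
        have : 0 < ρ x := h4.mpr hr
        omega
      · rw [if_neg hr]
        have : ¬ 0 < ρ x := fun hc => hr (h4.mp hc)
        omega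

lemma final (ρ : ℝ → ℤ) (hρ₀ : ρ x₀ = 0)
    (hρd : ∀ v : O, (ρ (v : ℝ)).natAbs = G.dist v₀ v)
    (hρs : ∀ (u v : O) (hu : u ≠ v₀) (hv : v ≠ v₀),
      (SimpleGraph.induce {w : O | w ≠ v₀} G).Reachable ⟨u, hu⟩ ⟨v, hv⟩ ↔
        (0 < ρ (u : ℝ) ↔ 0 < ρ (v : ℝ))) {x : ℝ} (hx : x ∈ O) :
    (ρ |α - x| = ρ x + 1 ∧ ρ |1 - x| = ρ x - 1) ∨
    (ρ |α - x| = ρ x - 1 ∧ ρ |1 - x| = ρ x + 1) := by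
  obtain ⟨c, hc, hρ⟩ := rho_eq h0 h1 hx₀ hx₀α hgen hO hG hv₀ ρ hρ₀ hρd hρs
  obtain ⟨hma, hm1, hd⟩ := master h0 h1 hx₀ hx₀α hgen hO hG hv₀ hx
  rw [hρ _ hx, hρ _ hma, hρ _ hm1]
  rcases hc with rfl | rfl <;> rcases hd with ⟨e1, e2⟩ | ⟨e1, e2⟩ <;>
    rw [e1, e2] <;> [left; right; right; left] <;> constructor <;> ring

end
end Stmt16X

open MeasureTheory ENNReal

/-- Observation of Section 5.2: let `0 < α < 1` be irrational, `x₀ ∈ (0, α)` with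
generic orbit `O = {⟨nα + εx₀⟩}`, let `G` be the orbit graph (edges given by
applications of `f_α(u) = |α - u|` and `f_1(u) = |1 - u|`), and let `ρ` be the signed
graph distance from the cut-vertex `v₀ = x₀` (positive on one component of `G - v₀`,
negative on the other).  Then for `θ` uniform on `{α, 1}` and any `x` in the orbit,
`ρ(f_θ(x)) = ρ(x) + 1` with probability `1/2` and `ρ(f_θ(x)) = ρ(x) - 1` with
probability `1/2`. -/
theorem stmt_16 (α : ℝ) (h0 : 0 < α) (h1 : α < 1) (hirr : Irrational α)
    (x₀ : ℝ) (hx₀ : 0 < x₀) (hx₀α : x₀ < α)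
    (O : Set ℝ)
    (hO : O = {y | ∃ n ε : ℤ, (ε = 1 ∨ ε = -1) ∧ y = Int.fract ((n : ℝ) * α + ε * x₀)})
    -- genericity: the labels `(n, ε)` of orbit points are distinct
    (hgen : ∀ n n' ε ε' : ℤ, (ε = 1 ∨ ε = -1) → (ε' = 1 ∨ ε' = -1) →
      Int.fract ((n : ℝ) * α + ε * x₀) = Int.fract ((n' : ℝ) * α + ε' * x₀) →
      n = n' ∧ ε = ε')
    (G : SimpleGraph O)
    (hG : G = SimpleGraph.fromRel
      (fun u v : O => |α - (u : ℝ)| = (v : ℝ) ∨ |1 - (u : ℝ)| = (v : ℝ)))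
    (v₀ : O) (hv₀ : (v₀ : ℝ) = x₀)
    (ρ : ℝ → ℤ) (hρ₀ : ρ x₀ = 0)
    -- `|ρ(v)|` is the graph distance from `v₀` to `v`
    (hρd : ∀ v : O, (ρ (v : ℝ)).natAbs = G.dist v₀ v)
    -- the sign of `ρ` distinguishes the two components of `G - v₀`
    (hρs : ∀ (u v : O) (hu : u ≠ v₀) (hv : v ≠ v₀),
      (SimpleGraph.induce {w : O | w ≠ v₀} G).Reachable ⟨u, hu⟩ ⟨v, hv⟩ ↔
        (0 < ρ (u : ℝ) ↔ 0 < ρ (v : ℝ)))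
    (μ : Measure ℝ) (hμ : μ = (2 : ℝ≥0∞)⁻¹ • (Measure.dirac α + Measure.dirac 1)) :
    ∀ x ∈ O, μ {θ : ℝ | ρ |θ - x| = ρ x + 1} = 1 / 2 ∧
      μ {θ : ℝ | ρ |θ - x| = ρ x - 1} = 1 / 2 := by
  have key : ∀ s : Set ℝ, ((α ∈ s ∧ (1:ℝ) ∉ s) ∨ (α ∉ s ∧ (1:ℝ) ∈ s)) → μ s = 1 / 2 := by
    intro s hs
    rw [hμ, Measure.smul_apply, Measure.add_apply, Measure.dirac_apply, Measure.dirac_apply]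
    rcases hs with ⟨h1s, h2s⟩ | ⟨h1s, h2s⟩ <;>
      simp [Set.indicator_of_mem, Set.indicator_of_notMem, h1s, h2s,
        ENNReal.div_eq_inv_mul, smul_eq_mul]
  intro x hx
  have hcase := Stmt16X.final h0 h1 hx₀ hx₀α hgen hO hG hv₀ ρ hρ₀ hρd hρs hx
  rcases hcase with ⟨e1, e2⟩ | ⟨e1, e2⟩
  · constructor
    · exact key _ (Or.inl ⟨e1, by simp only [Set.mem_setOf_eq, e2]; omega⟩)
    · exact key _ (Or.inr ⟨by simp only [Set.mem_setOf_eq, e1]; omega, e2⟩)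
  · constructor
    · exact key _ (Or.inr ⟨by simp only [Set.mem_setOf_eq, e1]; omega, e2⟩)
    · exact key _ (Or.inl ⟨e1, by simp only [Set.mem_setOf_eq, e2]; omega⟩)
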